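/- The factor i₄(k) = 9 c(k)²·(((k c(k))')² − 1) + (c(k)² − c(2k)²)·(3 + 15 c(k)² + 6 k c(k) c'(k) − k² c'(k)²), with c(k) = sqrt(tanh(k)/k), is strictly negative for all sufficiently large k. -/

import Mathlib

open Filter

noncomputable def cww (k : ℝ) : ℝ := Real.sqrt (Real.tanh k / k)

noncomputable def i4 (k : ℝ) : ℝ :=
  9 * cww k ^ 2 * ((deriv (fun k => k * cww k) k) ^ 2 - 1) +
    (cww k ^ 2 - cww (2 * k) ^ 2) *
      (3 + 15 * cww k ^ 2 + 6 * k * cww k * deriv cww k - k ^ 2 * (deriv cww k) ^ 2)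

lemma one_sub_tanh_sq (x : ℝ) : 1 - Real.tanh x ^ 2 = 1 / Real.cosh x ^ 2 := by
  have h2 := Real.cosh_sq_sub_sinh_sq x
  have hc := Real.cosh_pos x
  rw [Real.tanh_eq_sinh_div_cosh]
  field_simp
  linarith [h2]

lemma tanh_hasDerivAt (x : ℝ) : HasDerivAt Real.tanh (1 - Real.tanh x ^ 2) x := by
  have h := (Real.hasDerivAt_sinh x).div (Real.hasDerivAt_cosh x) (Real.cosh_pos x).ne'
  have heq : (Real.cosh x * Real.cosh x - Real.sinh x * Real.sinh x) / Real.cosh x ^ 2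
      = 1 - Real.tanh x ^ 2 := by
    rw [one_sub_tanh_sq]
    have h2 := Real.cosh_sq_sub_sinh_sq x
    have hc := Real.cosh_pos x
    field_simp
    nlinarith [h2]
  rw [heq] at h
  exact h.congr_of_eventuallyEq (by filter_upwards with y; rw [Real.tanh_eq_sinh_div_cosh]; rfl)

lemma tanh_pos {x : ℝ} (hx : 0 < x) : 0 < Real.tanh x := by
  rw [Real.tanh_eq_sinh_div_cosh]
  exact div_pos (by rwa [Real.sinh_pos_iff]) (Real.cosh_pos x)

noncomputable def Wf (k : ℝ) : ℝ :=
  (k * (1 - Real.tanh k ^ 2) ^ 2 / 4 - (1 - Real.tanh k ^ 2) * Real.tanh k / 2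
    + Real.tanh k ^ 2 / (4 * k)) / Real.tanh k

noncomputable def gf (k : ℝ) : ℝ :=
  9 * Real.tanh k * ((1 - Real.tanh k ^ 2) + Wf k - 1) +
    (Real.tanh k - Real.tanh (2 * k) / 2) *
      (3 + 12 * Real.tanh k / k + 3 * (1 - Real.tanh k ^ 2) - Wf k)

lemma key {k : ℝ} (hk : 0 < k) : k * i4 k = gf k := by
  set t := Real.tanh k with htdef
  have ht : 0 < t := tanh_pos hk
  have hk0 : k ≠ 0 := hk.ne'
  have htk : 0 < t / k := div_pos ht hk
  have hc2 : cww k ^ 2 = t / k := Real.sq_sqrt htk.le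
  have hc0 : cww k ≠ 0 := by
    unfold cww; positivity
  have hq : HasDerivAt (fun x => Real.tanh x / x)
      (((1 - t ^ 2) * k - t * 1) / k ^ 2) k :=
    (tanh_hasDerivAt k).div (hasDerivAt_id k) hk0
  have hcd : HasDerivAt cww
      (((1 - t ^ 2) * k - t * 1) / k ^ 2 / (2 * Real.sqrt (Real.tanh k / k))) k :=
    hq.sqrt htk.ne'
  have hD : deriv cww k = ((1 - t ^ 2) * k - t * 1) / k ^ 2 / (2 * cww k) := hcd.deriv
  have hcD : cww k * deriv cww k = ((1 - t ^ 2) * k - t) / (2 * k ^ 2) := by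
    rw [hD]
    field_simp
  have hD2 : (deriv cww k) ^ 2 = ((1 - t ^ 2) * k - t) ^ 2 / (4 * k ^ 3 * t) := by
    have hsplit : (deriv cww k) ^ 2 = (cww k * deriv cww k) ^ 2 / cww k ^ 2 := by
      rw [mul_pow]
      field_simp
    rw [hsplit, hcD, hc2]
    field_simp
    ring
  have hcd' : HasDerivAt cww (deriv cww k) k := by rw [hD]; exact hcd
  have hkc : deriv (fun x => x * cww x) k = cww k + k * deriv cww k := by
    have h := ((hasDerivAt_id k).mul hcd').deriv
    simp only [id_eq] at h
    rw [show (fun x => x * cww x) = id * cww from rfl, h]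
    ring
  have hP2 : (deriv (fun x => x * cww x) k) ^ 2 = (1 - t ^ 2) + Wf k := by
    rw [hkc]
    have expand : (cww k + k * deriv cww k) ^ 2
        = cww k ^ 2 + 2 * k * (cww k * deriv cww k) + k ^ 2 * (deriv cww k) ^ 2 := by ring
    rw [expand, hc2, hcD, hD2]
    unfold Wf
    rw [← htdef]
    field_simp
    ring
  have h2k : cww (2 * k) ^ 2 = Real.tanh (2 * k) / (2 * k) := by
    have : (0:ℝ) ≤ Real.tanh (2 * k) / (2 * k) :=
      (div_pos (tanh_pos (by linarith)) (by linarith)).le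
    exact Real.sq_sqrt this
  have h6 : 6 * k * cww k * deriv cww k = 6 * k * (cww k * deriv cww k) := by ring
  unfold i4
  rw [hP2, hc2, h2k, h6, hcD, hD2]
  unfold gf Wf
  rw [← htdef]
  field_simp
  ring

theorem i4_neg_at_infty : ∀ᶠ k in atTop, i4 k < 0 := by
  -- limits
  have h2x : Tendsto (fun x : ℝ => 2 * x) atTop atTop :=
    tendsto_id.const_mul_atTop two_pos
  have hE : Tendsto (fun x : ℝ => Real.exp (-(2 * x))) atTop (nhds 0) :=
    Real.tendsto_exp_atBot.comp (tendsto_neg_atBot_iff.mpr h2x)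
  have htanh_eq : ∀ x : ℝ, Real.tanh x
      = (1 - Real.exp (-(2 * x))) / (1 + Real.exp (-(2 * x))) := by
    intro x
    rw [Real.tanh_eq_sinh_div_cosh, Real.sinh_eq, Real.cosh_eq]
    have h1 : Real.exp (-(2 * x)) = Real.exp (-x) * Real.exp (-x) := by
      rw [← Real.exp_add]; ring_nf
    have h2 : Real.exp x * Real.exp (-x) = 1 := by
      rw [← Real.exp_add]; simp
    have he := Real.exp_pos x
    have he' := Real.exp_pos (-x)
    have hd : 0 < 1 + Real.exp (-(2 * x)) := by positivity
    rw [h1]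
    field_simp
    nlinarith [h2]
  have ht1 : Tendsto Real.tanh atTop (nhds 1) := by
    have h : Tendsto (fun x : ℝ => (1 - Real.exp (-(2 * x))) / (1 + Real.exp (-(2 * x))))
        atTop (nhds ((1 - 0) / (1 + 0))) :=
      (tendsto_const_nhds.sub hE).div (tendsto_const_nhds.add hE) (by norm_num)
    norm_num at h
    exact h.congr fun x => (htanh_eq x).symm
  have ht2 : Tendsto (fun k : ℝ => Real.tanh (2 * k)) atTop (nhds 1) := ht1.comp h2x
  have htsq : Tendsto (fun k : ℝ => Real.tanh k ^ 2) atTop (nhds 1) := by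
    simpa using ht1.pow 2
  have h1mt : Tendsto (fun k : ℝ => 1 - Real.tanh k ^ 2) atTop (nhds 0) := by
    have h := (tendsto_const_nhds : Tendsto (fun _ : ℝ => (1:ℝ)) atTop (nhds 1)).sub htsq
    simpa using h
  -- k * (1 - tanh k ^ 2) ^ 2 → 0
  have hw : Tendsto (fun k : ℝ => k * (1 - Real.tanh k ^ 2) ^ 2) atTop (nhds 0) := by
    have hbound : ∀ᶠ k : ℝ in atTop,
        |k * (1 - Real.tanh k ^ 2) ^ 2| ≤ 16 * (k * Real.exp (-k)) := by
      filter_upwards [eventually_ge_atTop (0:ℝ)] with k hk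
      have hc := Real.cosh_pos k
      have hch : Real.exp k / 2 ≤ Real.cosh k := by
        rw [Real.cosh_eq]
        have := (Real.exp_pos (-k)).le
        linarith
      have h1 : 1 - Real.tanh k ^ 2 = 1 / Real.cosh k ^ 2 := one_sub_tanh_sq k
      have hek := Real.exp_pos k
      have hle : 1 - Real.tanh k ^ 2 ≤ 4 * Real.exp (-k) * Real.exp (-k) := by
        rw [h1, Real.exp_neg]
        rw [div_le_iff₀ (by positivity)]
        have hge : Real.exp k ^ 2 / 4 ≤ Real.cosh k ^ 2 := by nlinarith
        have hinv : (Real.exp k)⁻¹ * Real.exp k = 1 := inv_mul_cancel₀ hek.ne'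
        nlinarith [hge, hinv, sq_nonneg ((Real.exp k)⁻¹)]
      have hnn : 0 ≤ 1 - Real.tanh k ^ 2 := by rw [h1]; positivity
      have hexple : Real.exp (-k) ≤ 1 := Real.exp_le_one_iff.mpr (by linarith)
      have hsq : (1 - Real.tanh k ^ 2) ^ 2 ≤ 16 * Real.exp (-k) := by
        have h4 : Real.exp (-k) * Real.exp (-k) ≤ Real.exp (-k) := by
          nlinarith [Real.exp_pos (-k)]
        nlinarith [Real.exp_pos (-k)]
      rw [abs_of_nonneg (by positivity)]
      nlinarith
    have hlim : Tendsto (fun k : ℝ => 16 * (k * Real.exp (-k))) atTop (nhds 0) := by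
      have := Real.tendsto_pow_mul_exp_neg_atTop_nhds_zero 1
      simp only [pow_one] at this
      simpa using this.const_mul 16
    exact squeeze_zero_norm' hbound hlim
  have ht0 : (1:ℝ) ≠ 0 := one_ne_zero
  have h4k : Tendsto (fun k : ℝ => 4 * k) atTop atTop := tendsto_id.const_mul_atTop (by norm_num)
  have hthird : Tendsto (fun k : ℝ => Real.tanh k ^ 2 / (4 * k)) atTop (nhds 0) :=
    htsq.div_atTop h4k
  have hnum : Tendsto (fun k : ℝ => k * (1 - Real.tanh k ^ 2) ^ 2 / 4
      - (1 - Real.tanh k ^ 2) * Real.tanh k / 2 + Real.tanh k ^ 2 / (4 * k))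
      atTop (nhds 0) := by
    have := ((hw.div_const 4).sub ((h1mt.mul ht1).div_const 2)).add hthird
    simpa using this
  have hW : Tendsto Wf atTop (nhds 0) := by
    have := hnum.div ht1 ht0
    rw [zero_div] at this
    exact this
  have h12 : Tendsto (fun k : ℝ => 12 * Real.tanh k / k) atTop (nhds 0) :=
    (ht1.const_mul 12).div_atTop tendsto_id
  have hA : Tendsto (fun k : ℝ => 9 * Real.tanh k * ((1 - Real.tanh k ^ 2) + Wf k - 1))
      atTop (nhds (9 * 1 * ((0:ℝ) + 0 - 1))) :=
    ((tendsto_const_nhds.mul ht1).mul ((h1mt.add hW).sub tendsto_const_nhds))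
  have hB : Tendsto (fun k : ℝ => (Real.tanh k - Real.tanh (2 * k) / 2) *
      (3 + 12 * Real.tanh k / k + 3 * (1 - Real.tanh k ^ 2) - Wf k))
      atTop (nhds (((1:ℝ) - 1 / 2) * (3 + 0 + 3 * 0 - 0))) :=
    (ht1.sub (ht2.div_const 2)).mul
      (((tendsto_const_nhds.add h12).add (h1mt.const_mul 3)).sub hW)
  have hg : Tendsto gf atTop (nhds (-(15/2) : ℝ)) := by
    have := hA.add hB
    norm_num at this
    convert this using 2 <;> simp [gf]
  have hneg : ∀ᶠ k : ℝ in atTop, gf k < 0 :=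
    hg.eventually (gt_mem_nhds (by norm_num : (-(15/2):ℝ) < 0))
  filter_upwards [hneg, eventually_gt_atTop (0:ℝ)] with k hgk hk
  have hkey := key hk
  nlinarith [hkey, hgk, hk]
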